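/- A Tychonoff space X is an Ascoli space if, and only if, there is a family 𝓜 of subspaces of X, each of which is an Ascoli space with the subspace topology, such that X is strongly functionally generated by 𝓜. -/

import Mathlib

open Set Filter Topology

/-- A set `H` of continuous real-valued functions is equicontinuous. -/
def EquicontinuousSet {X : Type*} [TopologicalSpace X] (H : Set C(X, ℝ)) : Prop :=
  ∀ x : X, ∀ ε : ℝ, 0 < ε → ∃ U ∈ 𝓝 x, ∀ x' ∈ U, ∀ f ∈ H, |f x' - f x| < ε

/-- `X` is Ascoli: every compact subset of `C_k(X)` is equicontinuous. -/
def AscoliSpace (X : Type*) [TopologicalSpace X] : Prop :=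
  ∀ K : Set C(X, ℝ), IsCompact K → EquicontinuousSet K

/-- `X` is sequentially Ascoli: every convergent sequence in `C_k(X)` is equicontinuous. -/
def SeqAscoliSpace (X : Type*) [TopologicalSpace X] : Prop :=
  ∀ (f : ℕ → C(X, ℝ)) (g : C(X, ℝ)), Tendsto f atTop (𝓝 g) →
    EquicontinuousSet (Set.range f ∪ {g})

/-- A function is `k`-continuous if its restriction to every compact subset is continuous. -/
def KContinuous {X Y : Type*} [TopologicalSpace X] [TopologicalSpace Y] (f : X → Y) : Prop :=
  ∀ K : Set X, IsCompact K → ContinuousOn f K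

/-- `X` is a `k_ℝ`-space if every `k`-continuous real-valued function is continuous. -/
def KRSpace (X : Type*) [TopologicalSpace X] : Prop :=
  ∀ f : X → ℝ, KContinuous f → Continuous f

/-- `X` is an `s_ℝ`-space if every sequentially continuous real-valued function is continuous. -/
def SRSpace (X : Type*) [TopologicalSpace X] : Prop :=
  ∀ f : X → ℝ, SeqContinuous f → Continuous f

/-- A function on a product is separately continuous. -/
def SeparatelyContinuous {X K : Type*} [TopologicalSpace X] [TopologicalSpace K]
    (Φ : X × K → ℝ) : Prop :=
  (∀ x : X, Continuous fun k => Φ (x, k)) ∧ (∀ k : K, Continuous fun x => Φ (x, k))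

/-- `X` is pseudocompact: every continuous real-valued function on `X` is bounded. -/
def Pseudocompact (X : Type*) [TopologicalSpace X] : Prop :=
  ∀ f : X → ℝ, Continuous f → ∃ M : ℝ, ∀ x : X, |f x| ≤ M

/-- A subset `A` of `X` is functionally bounded if every continuous real-valued
function on `X` is bounded on `A`. -/
def FunctionallyBounded {X : Type*} [TopologicalSpace X] (A : Set X) : Prop :=
  ∀ f : X → ℝ, Continuous f → ∃ M : ℝ, ∀ a ∈ A, |f a| ≤ M

/-- An `R`-quotient map: a continuous surjection such that real-valued functions on the
codomain are continuous as soon as their composition with the map is continuous. -/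
def RQuotientMap {X Y : Type*} [TopologicalSpace X] [TopologicalSpace Y] (p : X → Y) : Prop :=
  Continuous p ∧ Function.Surjective p ∧ ∀ φ : Y → ℝ, Continuous (φ ∘ p) → Continuous φ


lemma ascoli_of_homeomorph {X Y : Type*} [TopologicalSpace X] [TopologicalSpace Y]
    (e : X ≃ₜ Y) (h : AscoliSpace X) : AscoliSpace Y := by
  intro K hK y ε hε
  have hK' : IsCompact ((fun f : C(Y, ℝ) => f.comp (e : C(X, Y))) '' K) :=
    hK.image (ContinuousMap.continuous_precomp _)
  obtain ⟨U, hU, hUe⟩ := h _ hK' (e.symm y) ε hε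
  refine ⟨e.symm ⁻¹' U, e.symm.continuous.continuousAt.preimage_mem_nhds
    (by simpa using hU), fun y' hy' f hf => ?_⟩
  have := hUe (e.symm y') hy' (f.comp (e : C(X, Y))) ⟨f, hf, rfl⟩
  simpa using this

lemma min_add_le (a c : ℝ) (hc : 0 ≤ c) : min (a + c) 1 ≤ min a 1 + c := by
  rcases le_total a 1 with h | h
  · calc min (a + c) 1 ≤ a + c := min_le_left _ _
    _ = min a 1 + c := by rw [min_eq_left h]
  · calc min (a + c) 1 ≤ 1 := min_le_right _ _
    _ ≤ min a 1 + c := by rw [min_eq_right h]; linarith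

theorem ascoli_iff_stronglyFunctionallyGenerated {X : Type*} [TopologicalSpace X] [T35Space X] :
    AscoliSpace X ↔
      ∃ 𝓜 : Set (Set X), (∀ M ∈ 𝓜, AscoliSpace ↥M) ∧
        ∀ f : X → ℝ, (∀ M ∈ 𝓜, ContinuousOn f M) → Continuous f := by
  constructor
  · intro hX
    refine ⟨{Set.univ}, ?_, ?_⟩
    · rintro M rfl
      exact ascoli_of_homeomorph (Homeomorph.Set.univ X).symm hX
    · intro f hf
      rw [← continuousOn_univ]
      exact hf _ rfl
  · rintro ⟨𝓜, hAsc, hGen⟩ K hK x ε hε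
    rcases K.eq_empty_or_nonempty with rfl | ⟨f0, hf0⟩
    · exact ⟨Set.univ, Filter.univ_mem, fun x' _ f hf => absurd hf (Set.notMem_empty f)⟩
    -- the auxiliary function
    set g : X → ℝ := fun x' => ⨆ f : K, min |(f : C(X, ℝ)) x' - (f : C(X, ℝ)) x| 1 with hg
    have hbdd : ∀ x', BddAbove (Set.range fun f : K => min |(f : C(X, ℝ)) x' - (f : C(X, ℝ)) x| 1) := by
      intro x'
      exact ⟨1, by rintro _ ⟨f, rfl⟩; exact min_le_right _ _⟩
    have hne : Nonempty K := ⟨⟨f0, hf0⟩⟩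
    -- key estimate
    have key : ∀ x' y ε', (∀ f ∈ K, |f x' - f y| ≤ ε') → g x' ≤ g y + ε' := by
      intro x' y ε' h
      have hε' : 0 ≤ ε' := le_trans (abs_nonneg _) (h f0 hf0)
      refine ciSup_le fun f => ?_
      calc min |(f : C(X, ℝ)) x' - (f : C(X, ℝ)) x| 1
          ≤ min (|(f : C(X, ℝ)) y - (f : C(X, ℝ)) x| + ε') 1 := by
            refine min_le_min ?_ le_rfl
            calc |(f : C(X, ℝ)) x' - (f : C(X, ℝ)) x|
                ≤ |(f : C(X, ℝ)) y - (f : C(X, ℝ)) x| + |(f : C(X, ℝ)) x' - (f : C(X, ℝ)) y| := by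
                  have := abs_sub_le ((f : C(X, ℝ)) x') ((f : C(X, ℝ)) y) ((f : C(X, ℝ)) x)
                  linarith
              _ ≤ |(f : C(X, ℝ)) y - (f : C(X, ℝ)) x| + ε' := by
                  have := h f f.2; linarith
        _ ≤ min |(f : C(X, ℝ)) y - (f : C(X, ℝ)) x| 1 + ε' := min_add_le _ _ hε'
        _ ≤ g y + ε' := by
            have := le_ciSup (hbdd y) f
            simpa [hg] using add_le_add_right this ε'
    have key2 : ∀ x' y ε', (∀ f ∈ K, |f x' - f y| ≤ ε') → |g x' - g y| ≤ ε' := by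
      intro x' y ε' h
      rw [abs_sub_le_iff]
      constructor
      · linarith [key x' y ε' h]
      · have h' : ∀ f ∈ K, |f y - f x'| ≤ ε' := fun f hf => by
          rw [abs_sub_comm]; exact h f hf
        linarith [key y x' ε' h']
    -- g is continuous on each M ∈ 𝓜
    have hgM : ∀ M ∈ 𝓜, ContinuousOn g M := by
      intro M hM m hm
      rw [ContinuousWithinAt, Metric.tendsto_nhds]
      intro δ hδ
      -- restriction of K to M is compact in C(M, ℝ)
      have hK' : IsCompact ((fun f : C(X, ℝ) => f.restrict M) '' K) :=
        hK.image (ContinuousMap.continuous_restrict M)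
      obtain ⟨U, hU, hUe⟩ := hAsc M hM _ hK' ⟨m, hm⟩ (δ / 2) (by linarith)
      have hU' : Subtype.val '' U ∈ 𝓝[M] m := by
        rw [← map_nhds_subtype_val (⟨m, hm⟩ : M)]
        exact Filter.image_mem_map hU
      filter_upwards [hU'] with x' hx'
      obtain ⟨u, hu, rfl⟩ := hx'
      have hest : ∀ f ∈ K, |f (u : X) - f m| ≤ δ / 2 := by
        intro f hf
        have := hUe u hu (f.restrict M) ⟨f, hf, rfl⟩
        simp only [ContinuousMap.restrict_apply] at this
        exact le_of_lt this
      have := key2 (u : X) m (δ / 2) hest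
      rw [Real.dist_eq]
      linarith [abs_nonneg (g (u : X) - g m)]
    have hgc : Continuous g := hGen g hgM
    have hgx : g x = 0 := by
      simp only [hg, sub_self, abs_zero]
      rw [min_eq_left (by norm_num : (0 : ℝ) ≤ 1)]
      exact ciSup_const
    refine ⟨g ⁻¹' Set.Iio (min ε 1), ?_, ?_⟩
    · exact hgc.continuousAt.preimage_mem_nhds (by
        rw [hgx]
        exact Iio_mem_nhds (lt_min hε one_pos))
    · intro x' hx' f hf
      have hfg : min |f x' - f x| 1 ≤ g x' := le_ciSup (hbdd x') ⟨f, hf⟩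
      have hx'' : g x' < min ε 1 := hx'
      have h1 : min |f x' - f x| 1 < 1 := lt_of_le_of_lt hfg (lt_of_lt_of_le hx'' (min_le_right _ _))
      have h2 : min |f x' - f x| 1 = |f x' - f x| := by
        rcases le_total |f x' - f x| 1 with h | h
        · exact min_eq_left h
        · exfalso; rw [min_eq_right h] at h1; linarith
      rw [h2] at hfg
      exact lt_of_le_of_lt hfg (lt_of_lt_of_le hx'' (min_le_left _ _))
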